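/- Let d ≥ 2 and let x ≠ y be points of EuclideanSpace ℝ (Fin d), L = ‖y − x‖, u = (y − x)/L. Let n_x, n_y be unit vectors, and set v = u − ⟨u, n_x⟩ n_x and w = u − ⟨u, n_y⟩ n_y. Define L₁₂(η) = (−(η − ⟨η, n_x⟩ n_x) + ⟨w, η⟩ v)/L for η with ⟨η, n_y⟩ = 0, and L₂₁(ξ) = (−(ξ − ⟨ξ, n_y⟩ n_y) + ⟨v, ξ⟩ w)/L for ξ with ⟨ξ, n_x⟩ = 0. Then for every ξ with ⟨ξ, n_x⟩ = 0 and every η with ⟨η, n_y⟩ = 0 one has ⟨L₁₂(η), ξ⟩ = ⟨η, L₂₁(ξ)⟩, i.e. L₁₂ and L₂₁ are adjoint to one another. -/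

import Mathlib

open scoped RealInnerProductSpace

/-- The mixed second partial derivative operators `L₁₂` and `L₂₁` of the billiard
generating function `L(x,y) = |x - y|` are adjoint to one another. -/
theorem stmt_2 (d : ℕ) (hd : 2 ≤ d)
    (x y : EuclideanSpace ℝ (Fin d)) (hxy : x ≠ y)
    (L : ℝ) (hL : L = ‖y - x‖)
    (u : EuclideanSpace ℝ (Fin d)) (hu : u = L⁻¹ • (y - x))
    (nx ny : EuclideanSpace ℝ (Fin d)) (hnx : ‖nx‖ = 1) (hny : ‖ny‖ = 1)
    (v w : EuclideanSpace ℝ (Fin d))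
    (hv : v = u - ⟪u, nx⟫ • nx) (hw : w = u - ⟪u, ny⟫ • ny)
    (L12 L21 : EuclideanSpace ℝ (Fin d) → EuclideanSpace ℝ (Fin d))
    (hL12 : ∀ η, L12 η = L⁻¹ • (-(η - ⟪η, nx⟫ • nx) + ⟪w, η⟫ • v))
    (hL21 : ∀ ξ, L21 ξ = L⁻¹ • (-(ξ - ⟪ξ, ny⟫ • ny) + ⟪v, ξ⟫ • w)) :
    ∀ ξ η : EuclideanSpace ℝ (Fin d), ⟪ξ, nx⟫ = 0 → ⟪η, ny⟫ = 0 →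
      ⟪L12 η, ξ⟫ = ⟪η, L21 ξ⟫ := by
  intro ξ η hξ hη
  simp only [hL12, hL21, inner_smul_left, inner_smul_right, inner_add_left, inner_add_right,
    inner_neg_left, inner_neg_right, inner_sub_left, inner_sub_right, conj_trivial,
    real_inner_comm nx ξ, hξ, hη, real_inner_comm η ξ, real_inner_comm w η,
    real_inner_comm v ξ]
  rw [show (inner ℝ nx ξ : ℝ) = 0 from (real_inner_comm ξ nx) ▸ hξ]
  ring
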